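/- For all z > 0, ψ'(z) > 1/z + 1/(2z²), where ψ is the digamma function. -/

import Mathlib

open Real Filter Finset Topology Set

namespace Stmt3Aux

noncomputable def F1 (n : ℕ) (x : ℝ) : ℝ := Real.log n - ∑ m ∈ range (n+1), (x + m)⁻¹
noncomputable def F2 (n : ℕ) (x : ℝ) : ℝ := ∑ m ∈ range (n+1), 1/(x + m)^2
noncomputable def S (x : ℝ) : ℝ := ∑' m : ℕ, 1/(x + m)^2
noncomputable def P (x : ℝ) : ℝ :=
  -Real.eulerMascheroniConstant - ∑' m : ℕ, ((x + m)⁻¹ - ((m : ℝ) + 1)⁻¹)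

lemma base_summable : Summable (fun m : ℕ => 1/((m:ℝ)+1)^2) := by
  have h : Summable (fun n : ℕ => 1/(n:ℝ)^2) := summable_one_div_nat_pow.mpr one_lt_two
  have := (summable_nat_add_iff 1).mpr h
  refine this.congr fun n => by push_cast; ring

lemma c_bound {a : ℝ} (ha : 0 < a) (m : ℕ) : min a 1 * ((m:ℝ)+1) ≤ a + m := by
  have h1 : min a 1 ≤ a := min_le_left _ _
  have h2 : min a 1 ≤ 1 := min_le_right _ _
  have hm : (0:ℝ) ≤ m := Nat.cast_nonneg m
  nlinarith

lemma summable_sq {a : ℝ} (ha : 0 < a) : Summable (fun m : ℕ => 1/(a+(m:ℝ))^2) := by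
  set c := min a 1 with hc
  have hcpos : 0 < c := lt_min ha one_pos
  refine Summable.of_nonneg_of_le (fun m => by positivity) (fun m => ?_)
    (base_summable.mul_left (1/c^2))
  have h1 : c * ((m:ℝ)+1) ≤ a + m := c_bound ha m
  have h2 : (0:ℝ) < (m:ℝ)+1 := by positivity
  have h3 : (c*((m:ℝ)+1))^2 ≤ (a+m)^2 := by nlinarith [mul_pos hcpos h2]
  have h4 : (0:ℝ) < (c*((m:ℝ)+1))^2 := by positivity
  calc 1/(a+m)^2 ≤ 1/(c*((m:ℝ)+1))^2 := by
        apply one_div_le_one_div_of_le h4 h3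
    _ = 1/c^2 * (1/((m:ℝ)+1)^2) := by
        rw [mul_pow]
        field_simp

lemma diff_bound {a b x : ℝ} (ha : 0 < a) (hx : x ∈ Set.Icc a b) (m : ℕ) :
    |(x+(m:ℝ))⁻¹ - ((m:ℝ)+1)⁻¹| ≤ ((1+b)/(min a 1)) * (1/((m:ℝ)+1)^2) := by
  set c := min a 1 with hc
  have hcpos : 0 < c := lt_min ha one_pos
  have hax : a ≤ x := hx.1
  have hxb : x ≤ b := hx.2
  have hab : a ≤ b := le_trans hax hxb
  have hb : 0 < b := lt_of_lt_of_le ha hab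
  have hm1 : (0:ℝ) < (m:ℝ)+1 := by positivity
  have hxm : (0:ℝ) < x + m := by
    have : (0:ℝ) ≤ m := Nat.cast_nonneg m
    linarith
  have key : (x+(m:ℝ))⁻¹ - ((m:ℝ)+1)⁻¹ = (1-x)/((x+m)*((m:ℝ)+1)) := by
    field_simp
    ring
  rw [key, abs_div, abs_of_pos (mul_pos hxm hm1)]
  have hnum : |1-x| ≤ 1+b := by
    rw [abs_le]; constructor <;> linarith
  have hden : c*((m:ℝ)+1)^2 ≤ (x+m)*((m:ℝ)+1) := by
    have h1 : c * ((m:ℝ)+1) ≤ a + m := c_bound ha m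
    have : c * ((m:ℝ)+1)^2 = (c * ((m:ℝ)+1)) * ((m:ℝ)+1) := by ring
    rw [this]
    have : a + (m:ℝ) ≤ x + m := by linarith
    nlinarith
  have hdenpos : 0 < c*((m:ℝ)+1)^2 := by positivity
  calc |1-x|/((x+m)*((m:ℝ)+1)) ≤ (1+b)/(c*((m:ℝ)+1)^2) :=
        div_le_div₀ (by linarith) hnum hdenpos hden
    _ = ((1+b)/c) * (1/((m:ℝ)+1)^2) := by field_simp


lemma summable_diff {a b : ℝ} (ha : 0 < a) {x : ℝ} (hx : x ∈ Set.Icc a b) :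
    Summable (fun m : ℕ => (x+(m:ℝ))⁻¹ - ((m:ℝ)+1)⁻¹) := by
  refine Summable.of_norm (Summable.of_nonneg_of_le (fun m => norm_nonneg _)
    (fun m => ?_) (base_summable.mul_left ((1+b)/(min a 1))))
  simpa [Real.norm_eq_abs] using diff_bound ha hx m

lemma hasDerivAt_F (n : ℕ) {x : ℝ} (hx : 0 < x) :
    HasDerivAt (fun y => Real.BohrMollerup.logGammaSeq y n) (F1 n x) x := by
  have hsum : HasDerivAt (fun y : ℝ => ∑ m ∈ range (n+1), Real.log (y + m))
      (∑ m ∈ range (n+1), (x + (m:ℝ))⁻¹) x := by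
    refine HasDerivAt.fun_sum (fun m _ => ?_)
    have hne : x + (m:ℝ) ≠ 0 := by positivity
    have := ((hasDerivAt_id x).add_const (m:ℝ)).log hne
    simpa using this
  have h1 : HasDerivAt (fun y : ℝ => y * Real.log n + Real.log (Nat.factorial n))
      (Real.log n) x := (hasDerivAt_mul_const _).add_const _
  have := h1.sub hsum
  refine this.congr_deriv ?_
  simp [F1]

lemma hasDerivAt_F1 (n : ℕ) {x : ℝ} (hx : 0 < x) :
    HasDerivAt (F1 n) (F2 n x) x := by
  have hsum : HasDerivAt (fun y : ℝ => ∑ m ∈ range (n+1), (y + (m:ℝ))⁻¹)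
      (∑ m ∈ range (n+1), -(1/(x + (m:ℝ))^2)) x := by
    refine HasDerivAt.fun_sum (fun m _ => ?_)
    have hne : x + (m:ℝ) ≠ 0 := by positivity
    have := ((hasDerivAt_id x).add_const (m:ℝ)).inv hne
    simpa [neg_div, Pi.inv_def] using this
  have := hsum.const_sub (Real.log n)
  refine this.congr_deriv ?_
  simp [F2, Finset.sum_neg_distrib]


lemma tuo_F2 {a : ℝ} (ha : 0 < a) :
    TendstoUniformlyOn F2 S atTop (Set.Ici a) := by
  set c := min a 1 with hc
  have hcpos : 0 < c := lt_min ha one_pos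
  have hfu : ∀ (m : ℕ), ∀ x ∈ Set.Ici a, ‖1/(x+(m:ℝ))^2‖ ≤ 1/c^2 * (1/((m:ℝ)+1)^2) := by
    intro m x hx
    have hax : a ≤ x := hx
    have hm1 : (0:ℝ) < (m:ℝ)+1 := by positivity
    have h1 : c * ((m:ℝ)+1) ≤ a + m := c_bound ha m
    have hxm : c * ((m:ℝ)+1) ≤ x + m := by
      have : (0:ℝ) ≤ m := Nat.cast_nonneg m
      linarith
    have hxmpos : (0:ℝ) < x + m := lt_of_lt_of_le (by positivity) hxm
    rw [Real.norm_eq_abs, abs_of_pos (by positivity)]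
    have h3 : (c*((m:ℝ)+1))^2 ≤ (x+m)^2 := by nlinarith [mul_pos hcpos hm1]
    calc 1/(x+m)^2 ≤ 1/(c*((m:ℝ)+1))^2 :=
          one_div_le_one_div_of_le (by positivity) h3
      _ = 1/c^2 * (1/((m:ℝ)+1)^2) := by rw [mul_pow]; field_simp
  have h := tendstoUniformlyOn_tsum_nat (f := fun (m : ℕ) (x : ℝ) => 1/(x+m)^2)
    (u := fun m => 1/c^2 * (1/((m:ℝ)+1)^2)) (s := Set.Ici a) (base_summable.mul_left _) hfu
  intro u hu
  exact (tendsto_add_atTop_nat 1).eventually (h u hu)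

lemma tluo_F2 : TendstoLocallyUniformlyOn F2 S atTop (Set.Ioi 0) := by
  rw [tendstoLocallyUniformlyOn_iff_forall_isCompact isOpen_Ioi]
  intro K hK hKc
  rcases K.eq_empty_or_nonempty with h | hne
  · subst h; intro u hu; simp
  · have haK : sInf K ∈ K := hKc.sInf_mem hne
    have ha : 0 < sInf K := hK haK
    refine (tuo_F2 ha).mono fun x hx => ?_
    exact csInf_le hKc.bddBelow hx


lemma harmonic_cast (k : ℕ) : ((harmonic k : ℚ) : ℝ) = ∑ m ∈ range k, ((m:ℝ)+1)⁻¹ := by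
  rw [harmonic]
  push_cast
  rfl

lemma tendsto_log_sub : Tendsto (fun n : ℕ => Real.log (n+1) - Real.log n) atTop (𝓝 0) := by
  have h1 : Tendsto (fun n : ℕ => 1 + 1/(n:ℝ)) atTop (𝓝 1) := by
    simpa using (tendsto_const_nhds (x := (1:ℝ))).add tendsto_one_div_atTop_nhds_zero_nat
  have h2 : Tendsto (fun n : ℕ => Real.log (1 + 1/(n:ℝ))) atTop (𝓝 0) := by
    have := (Real.continuousAt_log one_ne_zero).tendsto.comp h1
    simpa [Function.comp_def] using this
  refine h2.congr' ?_
  filter_upwards [eventually_ge_atTop 1] with n hn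
  have hn0 : (0:ℝ) < n := by exact_mod_cast hn
  rw [show (1:ℝ) + 1/(n:ℝ) = ((n:ℝ)+1)/n by field_simp, Real.log_div (by positivity) hn0.ne']

lemma tendsto_const_part :
    Tendsto (fun n : ℕ => Real.log n - (harmonic (n+1) : ℝ)) atTop
      (𝓝 (-Real.eulerMascheroniConstant)) := by
  have h1 : Tendsto (fun n : ℕ => (harmonic (n+1) : ℝ) - Real.log (n+1)) atTop
      (𝓝 Real.eulerMascheroniConstant) := by
    have := Real.tendsto_harmonic_sub_log.comp (tendsto_add_atTop_nat 1)
    refine this.congr fun n => ?_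
    simp only [Function.comp]
    push_cast
    ring_nf
  have := (h1.neg.sub tendsto_log_sub)
  rw [show -Real.eulerMascheroniConstant - 0 = -Real.eulerMascheroniConstant by ring] at this
  refine this.congr fun n => ?_
  push_cast
  ring

lemma tendsto_F1 {x : ℝ} (hx : 0 < x) : Tendsto (fun n => F1 n x) atTop (𝓝 (P x)) := by
  have hsum := summable_diff (a := x) (b := x) hx ⟨le_refl x, le_refl x⟩
  have h2 : Tendsto (fun n : ℕ => ∑ m ∈ range (n+1), ((x+(m:ℝ))⁻¹ - ((m:ℝ)+1)⁻¹)) atTop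
      (𝓝 (∑' m : ℕ, ((x+(m:ℝ))⁻¹ - ((m:ℝ)+1)⁻¹))) :=
    hsum.hasSum.tendsto_sum_nat.comp (tendsto_add_atTop_nat 1)
  have := tendsto_const_part.sub h2
  refine this.congr fun n => ?_
  simp only [F1, P]
  rw [harmonic_cast, Finset.sum_sub_distrib]
  ring

lemma tuo_F1 {a b : ℝ} (ha : 0 < a) : TendstoUniformlyOn F1 P atTop (Set.Icc a b) := by
  have hG : TendstoUniformlyOn
      (fun (n : ℕ) (x : ℝ) => ∑ m ∈ range n, ((x+(m:ℝ))⁻¹ - ((m:ℝ)+1)⁻¹))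
      (fun x => ∑' m : ℕ, ((x+(m:ℝ))⁻¹ - ((m:ℝ)+1)⁻¹)) atTop (Set.Icc a b) := by
    refine tendstoUniformlyOn_tsum_nat (u := fun m => ((1+b)/(min a 1)) * (1/((m:ℝ)+1)^2))
      (base_summable.mul_left _) ?_
    intro m x hx
    simpa [Real.norm_eq_abs] using diff_bound ha hx m
  have hG' : TendstoUniformlyOn
      (fun (n : ℕ) (x : ℝ) => ∑ m ∈ range (n+1), ((x+(m:ℝ))⁻¹ - ((m:ℝ)+1)⁻¹))
      (fun x => ∑' m : ℕ, ((x+(m:ℝ))⁻¹ - ((m:ℝ)+1)⁻¹)) atTop (Set.Icc a b) := by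
    intro u hu
    exact (tendsto_add_atTop_nat 1).eventually (hG u hu)
  have hc : TendstoUniformlyOn
      (fun (n : ℕ) (_ : ℝ) => Real.log n - (harmonic (n+1) : ℝ))
      (fun _ => -Real.eulerMascheroniConstant) atTop (Set.Icc a b) :=
    tendsto_const_part.tendstoUniformlyOn_const _
  have := hc.sub hG'
  refine this.congr ?_
  filter_upwards with n
  intro x hx
  simp only [Pi.sub_apply, F1]
  rw [harmonic_cast, Finset.sum_sub_distrib]
  ring

lemma tluo_F1 : TendstoLocallyUniformlyOn F1 P atTop (Set.Ioi 0) := by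
  rw [tendstoLocallyUniformlyOn_iff_forall_isCompact isOpen_Ioi]
  intro K hK hKc
  rcases K.eq_empty_or_nonempty with h | hne
  · subst h; intro u hu; simp
  · have haK : sInf K ∈ K := hKc.sInf_mem hne
    have ha : 0 < sInf K := hK haK
    refine (tuo_F1 (b := sSup K) ha).mono fun x hx => ?_
    exact ⟨csInf_le hKc.bddBelow hx, le_csSup hKc.bddAbove hx⟩


lemma hasDerivAt_P {x : ℝ} (hx : 0 < x) : HasDerivAt P (S x) x :=
  hasDerivAt_of_tendstoLocallyUniformlyOn isOpen_Ioi tluo_F2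
    (Eventually.of_forall fun n y hy => hasDerivAt_F1 n hy)
    (fun y hy => tendsto_F1 hy) hx

lemma hasDerivAt_logGamma {x : ℝ} (hx : 0 < x) :
    HasDerivAt (fun t => Real.log (Real.Gamma t)) (P x) x :=
  hasDerivAt_of_tendstoLocallyUniformlyOn isOpen_Ioi tluo_F1
    (Eventually.of_forall fun n y hy => hasDerivAt_F n hy)
    (fun y hy => Real.BohrMollerup.tendsto_log_gamma hy) hx

end Stmt3Aux

noncomputable def psi (z : ℝ) : ℝ := deriv (fun t => Real.log (Real.Gamma t)) z

theorem stmt_3 (z : ℝ) (hz : 0 < z) :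
    deriv psi z > 1 / z + 1 / (2 * z ^ 2) := by
  open Stmt3Aux in
  have hpsiP : psi =ᶠ[𝓝 z] P :=
    eventually_of_mem (isOpen_Ioi.mem_nhds hz) fun y hy => (hasDerivAt_logGamma hy).deriv
  have hderiv : deriv psi z = S z := by
    rw [hpsiP.deriv_eq, (hasDerivAt_P hz).deriv]
  rw [hderiv]
  -- the telescoping comparison
  set t : ℕ → ℝ := fun m => 1/(z+m) + 1/(2*(z+(m:ℝ))^2) with ht
  have hzm : ∀ m : ℕ, (0:ℝ) < z + m := fun m => by positivity
  have hterm : ∀ m : ℕ, t m - t (m+1) < 1/(z+(m:ℝ))^2 := by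
    intro m
    have h1 : (0:ℝ) < z + m := hzm m
    have h2 : (0:ℝ) < z + m + 1 := by linarith
    have key : 1/(z+(m:ℝ))^2 - (t m - t (m+1)) = 1/(2*(z+(m:ℝ))^2*(z+(m:ℝ)+1)^2) := by
      simp only [ht]
      push_cast
      field_simp
      ring
    nlinarith [key, one_div_pos.mpr (by positivity : (0:ℝ) < 2*(z+(m:ℝ))^2*(z+(m:ℝ)+1)^2)]
  have hnn : ∀ m : ℕ, 0 ≤ t m - t (m+1) := by
    intro m
    have h1 : (0:ℝ) < z + m := hzm m
    have h2 : (0:ℝ) < z + m + 1 := by linarith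
    have e1 : 1/(z+(m:ℝ)+1) ≤ 1/(z+(m:ℝ)) := by
      apply one_div_le_one_div_of_le h1; linarith
    have e2 : 1/(2*(z+(m:ℝ)+1)^2) ≤ 1/(2*(z+(m:ℝ))^2) := by
      apply one_div_le_one_div_of_le (by positivity); nlinarith
    simp only [ht]
    push_cast
    rw [show z + ((m:ℝ)+1) = z + (m:ℝ) + 1 from by ring]
    linarith
  have htend : Tendsto t atTop (𝓝 0) := by
    have h1 : Tendsto (fun m : ℕ => z + (m:ℝ)) atTop atTop :=
      tendsto_atTop_add_const_left _ _ tendsto_natCast_atTop_atTop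
    have h2 : Tendsto (fun m : ℕ => 1/(z+(m:ℝ))) atTop (𝓝 0) := by
      simpa [one_div, Pi.inv_def] using h1.inv_tendsto_atTop
    have h4 : Tendsto (fun m : ℕ => 1/(2*(z+(m:ℝ))^2)) atTop (𝓝 0) := by
      have := (h2.mul h2).const_mul (1/2 : ℝ)
      simp only [mul_zero] at this
      refine this.congr fun m => ?_
      have hm := (hzm m).ne'
      field_simp
    have := h2.add h4
    rw [add_zero] at this
    exact this
  have hts : HasSum (fun m : ℕ => t m - t (m+1)) (t 0) := by
    rw [hasSum_iff_tendsto_nat_of_nonneg hnn]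
    have : ∀ n : ℕ, ∑ i ∈ Finset.range n, (t i - t (i+1)) = t 0 - t n :=
      fun n => Finset.sum_range_sub' t n
    simp only [this]
    simpa using tendsto_const_nhds.sub htend
  have hsq := summable_sq hz
  have : t 0 < S z := by
    rw [← hts.tsum_eq, S]
    exact Summable.tsum_lt_tsum_of_nonneg hnn (fun m => (hterm m).le) (hterm 0) hsq
  refine lt_of_le_of_lt (le_of_eq ?_) this
  simp only [ht]
  norm_num
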